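/- arXiv:1701.07536 — 5 statements merged into one kernel-verified Lean document; each statement's English description precedes it below -/
import Mathlib

section
/- Let m ≥ 2 and n ≥ 1. If A ∈ ℝ^{[m,n]} is a nonsingular M-tensor, then its partial symmetrization Â is also a nonsingular M-tensor. -/
/-!
We model an `m`-th order, `n`-dimensional real tensor with `m = k + 2` (so `m ≥ 2`)
as a map `Fin n → (Fin (k+1) → Fin n) → ℝ`: the first index, followed by the
`m - 1 = k + 1` trailing indices.
-/

noncomputable section

/-- The vector `A x^{m-1}`. -/
def tvec (n k : ℕ) (A : Fin n → (Fin (k + 1) → Fin n) → ℝ) (x : Fin n → ℝ) :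
    Fin n → ℝ :=
  fun i => ∑ g : Fin (k + 1) → Fin n, A i g * ∏ j, x (g j)

/-- The `n × n` matrix `A x^{m-2}`, with `(i,j)` entry
`∑_{i₃,…,i_m} A_{i j i₃ ⋯ i_m} x_{i₃} ⋯ x_{i_m}`. -/
def tmat (n k : ℕ) (A : Fin n → (Fin (k + 1) → Fin n) → ℝ) (x : Fin n → ℝ) :
    Matrix (Fin n) (Fin n) ℝ :=
  fun i j => ∑ h : Fin k → Fin n, A i (Fin.cons j h) * ∏ l, x (h l)

/-- The identity tensor `I`: entries `1` when all indices coincide, `0` otherwise. -/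
def idT (n k : ℕ) : Fin n → (Fin (k + 1) → Fin n) → ℝ :=
  fun i g => if ∀ j, g j = i then 1 else 0

/-- `lam ∈ ℂ` is an eigenvalue of the tensor `B`: `B x^{m-1} = lam * x^{[m-1]}` for some
nonzero complex vector `x`. -/
def IsEig (n k : ℕ) (B : Fin n → (Fin (k + 1) → Fin n) → ℝ) (lam : ℂ) : Prop :=
  ∃ x : Fin n → ℂ, x ≠ 0 ∧
    ∀ i, ∑ g : Fin (k + 1) → Fin n, (B i g : ℂ) * ∏ j, x (g j) = lam * (x i) ^ (k + 1)

/-- The spectral radius of a tensor: supremum of moduli of its eigenvalues. -/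
def specRad (n k : ℕ) (B : Fin n → (Fin (k + 1) → Fin n) → ℝ) : ℝ :=
  sSup {r : ℝ | ∃ lam : ℂ, IsEig n k B lam ∧ r = ‖lam‖}

/-- A tensor is nonnegative if all its entries are nonnegative. -/
def NonnegT (n k : ℕ) (B : Fin n → (Fin (k + 1) → Fin n) → ℝ) : Prop :=
  ∀ i g, 0 ≤ B i g

/-- `A` is a nonsingular M-tensor: `A = s I - B` with `B` nonnegative and `s > ρ(B)`. -/
def IsNsMTensor (n k : ℕ) (A : Fin n → (Fin (k + 1) → Fin n) → ℝ) : Prop :=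
  ∃ s : ℝ, ∃ B : Fin n → (Fin (k + 1) → Fin n) → ℝ,
    NonnegT n k B ∧ specRad n k B < s ∧
    A = fun i g => s * idT n k i g - B i g

/-- The partial symmetrization `Â` of `A` over the trailing `m - 1` indices. -/
def psym (n k : ℕ) (A : Fin n → (Fin (k + 1) → Fin n) → ℝ) :
    Fin n → (Fin (k + 1) → Fin n) → ℝ :=
  fun i g => (1 / (Nat.factorial (k + 1) : ℝ)) *
    ∑ π : Equiv.Perm (Fin (k + 1)), A i (g ∘ π)

end

lemma sum_perm_comp (n k : ℕ) (B : Fin n → (Fin (k + 1) → Fin n) → ℝ)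
    (x : Fin n → ℂ) (i : Fin n) (π : Equiv.Perm (Fin (k + 1))) :
    ∑ g : Fin (k + 1) → Fin n, (B i (g ∘ π) : ℂ) * ∏ j, x (g j)
      = ∑ g : Fin (k + 1) → Fin n, (B i g : ℂ) * ∏ j, x (g j) := by
  apply Fintype.sum_equiv (Equiv.arrowCongr π.symm (Equiv.refl (Fin n)))
  intro g
  have h1 : (Equiv.arrowCongr π.symm (Equiv.refl (Fin n))) g = g ∘ π := by
    ext j; simp [Equiv.arrowCongr]
  rw [h1]
  congr 1
  exact (Equiv.prod_comp π (fun j => x (g j))).symm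

lemma psym_sum (n k : ℕ) (B : Fin n → (Fin (k + 1) → Fin n) → ℝ)
    (x : Fin n → ℂ) (i : Fin n) :
    ∑ g : Fin (k + 1) → Fin n, (psym n k B i g : ℂ) * ∏ j, x (g j)
      = ∑ g : Fin (k + 1) → Fin n, (B i g : ℂ) * ∏ j, x (g j) := by
  have hf : ((Nat.factorial (k + 1) : ℝ) : ℂ) ≠ 0 := by
    exact_mod_cast Nat.cast_ne_zero.mpr (Nat.factorial_ne_zero (k + 1))
  simp only [psym, Complex.ofReal_mul, Complex.ofReal_sum, Complex.ofReal_div,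
    Complex.ofReal_one]
  have step : ∀ g : Fin (k + 1) → Fin n,
      (1 / ((Nat.factorial (k + 1) : ℝ) : ℂ) * ∑ π : Equiv.Perm (Fin (k + 1)),
        ((B i (g ∘ π) : ℝ) : ℂ)) * ∏ j, x (g j)
      = 1 / ((Nat.factorial (k + 1) : ℝ) : ℂ) *
        ∑ π : Equiv.Perm (Fin (k + 1)), ((B i (g ∘ π) : ℝ) : ℂ) * ∏ j, x (g j) := by
    intro g
    rw [mul_assoc, Finset.sum_mul]
  simp only [step]
  rw [← Finset.mul_sum, Finset.sum_comm]
  have : ∀ π : Equiv.Perm (Fin (k + 1)), π ∈ (Finset.univ : Finset (Equiv.Perm (Fin (k+1)))) →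
      ∑ g : Fin (k + 1) → Fin n, ((B i (g ∘ π) : ℝ) : ℂ) * ∏ j, x (g j)
      = ∑ g : Fin (k + 1) → Fin n, ((B i g : ℝ) : ℂ) * ∏ j, x (g j) :=
    fun π _ => sum_perm_comp n k B x i π
  rw [Finset.sum_congr rfl this, Finset.sum_const, Finset.card_univ,
    Fintype.card_perm, Fintype.card_fin, nsmul_eq_mul, ← mul_assoc]
  push_cast
  rw [one_div_mul_cancel (show (((k+1).factorial : ℕ) : ℂ) ≠ 0 by
    exact_mod_cast Nat.factorial_ne_zero (k+1)), one_mul]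

lemma eig_psym_iff (n k : ℕ) (B : Fin n → (Fin (k + 1) → Fin n) → ℝ) (lam : ℂ) :
    IsEig n k (psym n k B) lam ↔ IsEig n k B lam := by
  unfold IsEig
  constructor <;> rintro ⟨x, hx, hxe⟩ <;> exact ⟨x, hx, fun i => by
    rw [← hxe i]; rw [psym_sum] <;> rfl⟩

lemma idT_comp (n k : ℕ) (i : Fin n) (g : Fin (k + 1) → Fin n)
    (π : Equiv.Perm (Fin (k + 1))) : idT n k i (g ∘ π) = idT n k i g := by
  unfold idT
  congr 1
  simp only [Function.comp, eq_iff_iff]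
  exact ⟨fun h j => by simpa using h (π.symm j), fun h j => h (π j)⟩

/-- If `A` is a nonsingular M-tensor, so is its partial symmetrization `Â`. -/
theorem psym_isNsMTensor (k n : ℕ) (hn : 1 ≤ n)
    (A : Fin n → (Fin (k + 1) → Fin n) → ℝ) (hA : IsNsMTensor n k A) :
    IsNsMTensor n k (psym n k A) := by
  obtain ⟨s, B, hB, hs, hEq⟩ := hA
  have hfne : (Nat.factorial (k + 1) : ℝ) ≠ 0 := by
    exact_mod_cast Nat.factorial_ne_zero (k + 1)
  refine ⟨s, psym n k B, ?_, ?_, ?_⟩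
  · intro i g
    apply mul_nonneg
    · positivity
    · exact Finset.sum_nonneg fun π _ => hB i _
  · have : specRad n k (psym n k B) = specRad n k B := by
      unfold specRad
      congr 1
      ext r
      simp only [Set.mem_setOf_eq, eig_psym_iff]
    rwa [this]
  · subst hEq
    funext i g
    unfold psym
    simp only [idT_comp, Finset.sum_sub_distrib, Finset.sum_const,
      Finset.card_univ, Fintype.card_perm, Fintype.card_fin, nsmul_eq_mul,
      mul_sub]
    rw [← mul_assoc]
    field_simp
end

section
/- Let m ≥ 2 and n ≥ 1. Suppose A ∈ ℝ^{[m,n]} is a nonsingular M-tensor and b ∈ ℝⁿ is a positive vector. Then there exists a real number τ₀ > 0 such that for every t ∈ [0, 1+τ₀) the system (t A + (1−t) I) x^{m-1} = b has a unique positive solution x ∈ ℝⁿ (i.e., there is exactly one x with all entries positive satisfying the equation). -/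
open Finset Filter Topology

section helpers
variable {n k : ℕ}

lemma tvec_nonneg {B : Fin n → (Fin (k+1) → Fin n) → ℝ} (hB : ∀ i g, 0 ≤ B i g)
    {x : Fin n → ℝ} (hx : ∀ i, 0 ≤ x i) (i : Fin n) : 0 ≤ tvec n k B x i :=
  Finset.sum_nonneg fun g _ => mul_nonneg (hB i g) (Finset.prod_nonneg fun j _ => hx _)

lemma tvec_mono {B : Fin n → (Fin (k+1) → Fin n) → ℝ} (hB : ∀ i g, 0 ≤ B i g)
    {x y : Fin n → ℝ} (hx : ∀ i, 0 ≤ x i) (hxy : ∀ i, x i ≤ y i) (i : Fin n) :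
    tvec n k B x i ≤ tvec n k B y i :=
  Finset.sum_le_sum fun g _ => mul_le_mul_of_nonneg_left
    (Finset.prod_le_prod (fun j _ => hx _) (fun j _ => hxy _)) (hB i g)

lemma tvec_smul (B : Fin n → (Fin (k+1) → Fin n) → ℝ) (c : ℝ) (x : Fin n → ℝ) (i : Fin n) :
    tvec n k B (fun j => c * x j) i = c^(k+1) * tvec n k B x i := by
  simp only [tvec, Finset.mul_sum]
  refine Finset.sum_congr rfl fun g _ => ?_
  rw [Finset.prod_mul_distrib, Finset.prod_const]
  simp [Finset.card_univ]
  ring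

lemma tvec_idT (x : Fin n → ℝ) (i : Fin n) : tvec n k (idT n k) x i = x i ^ (k+1) := by
  rw [show tvec n k (idT n k) x i = ∑ g : Fin (k+1) → Fin n, idT n k i g * ∏ j, x (g j) from rfl,
    Finset.sum_eq_single (fun _ => i)]
  · simp [idT, Finset.prod_const, Finset.card_univ]
  · intro g _ hg
    have h : ¬ (∀ j, g j = i) := fun h => hg (funext h)
    simp [idT, h]
  · simp

lemma tvec_combo (P Q : Fin n → (Fin (k+1) → Fin n) → ℝ) (a c : ℝ) (x : Fin n → ℝ) (i : Fin n) :
    tvec n k (fun i g => a * P i g + c * Q i g) x i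
      = a * tvec n k P x i + c * tvec n k Q x i := by
  simp only [tvec, Finset.mul_sum, ← Finset.sum_add_distrib]
  exact Finset.sum_congr rfl fun g _ => by ring

lemma tvec_cmul (B : Fin n → (Fin (k+1) → Fin n) → ℝ) (c : ℝ) (x : Fin n → ℝ) (i : Fin n) :
    tvec n k (fun i g => c * B i g) x i = c * tvec n k B x i := by
  simp only [tvec, Finset.mul_sum]
  exact Finset.sum_congr rfl fun g _ => by ring

lemma tvec_continuous (B : Fin n → (Fin (k+1) → Fin n) → ℝ) (i : Fin n) :
    Continuous (fun x : Fin n → ℝ => tvec n k B x i) := by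
  unfold tvec
  exact continuous_finset_sum _ fun g _ =>
    continuous_const.mul (continuous_finset_prod _ fun j _ => continuous_apply _)

lemma sum_prod_eq (x : Fin n → ℝ) :
    ∑ g : Fin (k+1) → Fin n, ∏ j : Fin (k+1), x (g j) = (∑ j, x j)^(k+1) := by
  have := Finset.prod_univ_sum (fun _ : Fin (k+1) => (Finset.univ : Finset (Fin n)))
    (fun _ j => x j)
  rw [Finset.prod_const, Finset.card_univ, Fintype.card_fin] at this
  rw [this, Fintype.piFinset_univ]

lemma tvec_addconst (B : Fin n → (Fin (k+1) → Fin n) → ℝ) (c : ℝ) (x : Fin n → ℝ) (i : Fin n) :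
    tvec n k (fun i g => B i g + c) x i = tvec n k B x i + c * (∑ j, x j)^(k+1) := by
  simp only [tvec, add_mul, Finset.sum_add_distrib]
  congr 1
  rw [← Finset.mul_sum, sum_prod_eq]

end helpers
section helpers2
variable {n k : ℕ}

lemma eig_abs_le (hn : 1 ≤ n) (B : Fin n → (Fin (k+1) → Fin n) → ℝ) {lam : ℂ}
    (h : IsEig n k B lam) : ‖lam‖ ≤ ∑ i, ∑ g, |B i g| := by
  obtain ⟨x, hx0, hx⟩ := h
  have hne : (Finset.univ : Finset (Fin n)).Nonempty := ⟨⟨0, hn⟩, Finset.mem_univ _⟩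
  obtain ⟨i0, -, hi0⟩ := Finset.exists_max_image Finset.univ (fun i => ‖x i‖) hne
  have hxi0 : 0 < ‖x i0‖ := by
    obtain ⟨j, hj⟩ := Function.ne_iff.1 hx0
    exact lt_of_lt_of_le (by simpa using hj) (hi0 j (Finset.mem_univ _))
  have key : ‖lam‖ * ‖x i0‖ ^ (k+1) ≤
      (∑ g, |B i0 g|) * ‖x i0‖ ^ (k+1) := by
    have h1 : ‖lam * (x i0)^(k+1)‖ ≤ ∑ g, |B i0 g| * ‖x i0‖ ^ (k+1) := by
      rw [← hx i0]
      refine le_trans (norm_sum_le _ _) (Finset.sum_le_sum fun g _ => ?_)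
      rw [norm_mul, Complex.norm_real, Real.norm_eq_abs, norm_prod]
      refine mul_le_mul_of_nonneg_left ?_ (abs_nonneg _)
      calc ∏ j, ‖x (g j)‖ ≤ ∏ j : Fin (k+1), ‖x i0‖ :=
            Finset.prod_le_prod (fun j _ => norm_nonneg _)
              (fun j _ => hi0 _ (Finset.mem_univ _))
        _ = ‖x i0‖ ^ (k+1) := by
            rw [Finset.prod_const, Finset.card_univ, Fintype.card_fin]
    rw [norm_mul, norm_pow] at h1
    rw [← Finset.sum_mul] at h1
    exact h1
  have h2 : ‖lam‖ ≤ ∑ g, |B i0 g| :=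
    le_of_mul_le_mul_right key (pow_pos hxi0 _)
  refine h2.trans (Finset.single_le_sum (f := fun i => ∑ g, |B i g|)
    (fun i _ => Finset.sum_nonneg fun g _ => abs_nonneg _) (Finset.mem_univ i0))

lemma specRad_ge (hn : 1 ≤ n) (B : Fin n → (Fin (k+1) → Fin n) → ℝ) {z : Fin n → ℝ} {ρ : ℝ}
    (hρ : 0 ≤ ρ) (hz0 : z ≠ 0) (h : ∀ i, tvec n k B z i = ρ * z i ^ (k+1)) :
    ρ ≤ specRad n k B := by
  have hEig : IsEig n k B (ρ : ℂ) := by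
    refine ⟨fun i => (z i : ℂ), ?_, ?_⟩
    · intro hc
      apply hz0
      funext i
      have := congrFun hc i
      simpa using this
    · intro i
      have h2 := congrArg (Complex.ofReal) (h i)
      rw [show tvec n k B z i = ∑ g : Fin (k+1) → Fin n, B i g * ∏ j, z (g j) from rfl] at h2
      push_cast at h2
      exact h2
  refine le_csSup ⟨∑ i, ∑ g, |B i g|, ?_⟩ ⟨(ρ : ℂ), hEig, ?_⟩
  · rintro r ⟨lam, hlam, rfl⟩
    exact eig_abs_le hn B hlam
  · rw [Complex.norm_real, Real.norm_eq_abs, abs_of_nonneg hρ]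

lemma pow_add_le_aux {a t : ℝ} (p : ℕ) (ha0 : 0 ≤ a) (ha1 : a ≤ 1) (ht0 : 0 ≤ t) (ht1 : t ≤ 1) :
    (a + t)^p ≤ a^p + p * 2^p * t := by
  have key := geom_sum₂_mul (a + t) a p
  have hsum : (∑ i ∈ Finset.range p, (a+t)^i * a^(p - 1 - i)) ≤ p * 2^p := by
    calc (∑ i ∈ Finset.range p, (a+t)^i * a^(p - 1 - i))
        ≤ ∑ i ∈ Finset.range p, (2:ℝ)^p := by
          refine Finset.sum_le_sum fun i hi => ?_
          have h1 : (a+t)^i ≤ 2^i :=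
            pow_le_pow_left₀ (by linarith) (by linarith) i
          have h2 : a^(p-1-i) ≤ 1 := pow_le_one₀ ha0 ha1
          have h3 : (2:ℝ)^i ≤ 2^p :=
            pow_le_pow_right₀ one_le_two (le_of_lt (Finset.mem_range.1 hi))
          nlinarith [pow_nonneg (show (0:ℝ) ≤ a + t by linarith) i,
            pow_nonneg ha0 (p-1-i)]
      _ = p * 2^p := by rw [Finset.sum_const, Finset.card_range]; ring
  have hsum0 : 0 ≤ (∑ i ∈ Finset.range p, (a+t)^i * a^(p - 1 - i)) :=
    Finset.sum_nonneg fun i _ => mul_nonneg (pow_nonneg (by linarith) _) (pow_nonneg ha0 _)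
  nlinarith [key]

lemma simplex_compact : IsCompact {z : Fin n → ℝ | (∀ i, 0 ≤ z i) ∧ ∑ i, z i = 1} := by
  have hsub : {z : Fin n → ℝ | (∀ i, 0 ≤ z i) ∧ ∑ i, z i = 1} ⊆
      Set.pi Set.univ (fun _ => Set.Icc (0:ℝ) 1) := by
    rintro z ⟨h0, h1⟩ i -
    refine ⟨h0 i, ?_⟩
    calc z i ≤ ∑ j, z j := Finset.single_le_sum (fun j _ => h0 j) (Finset.mem_univ i)
      _ = 1 := h1
  refine IsCompact.of_isClosed_subset (isCompact_univ_pi fun _ => isCompact_Icc) ?_ hsub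
  have h1 : IsClosed {z : Fin n → ℝ | ∀ i, 0 ≤ z i} := by
    have : {z : Fin n → ℝ | ∀ i, 0 ≤ z i} = ⋂ i, {z | 0 ≤ z i} := by
      ext z; simp
    rw [this]
    exact isClosed_iInter fun i => isClosed_le continuous_const (continuous_apply i)
  have h2 : IsClosed {z : Fin n → ℝ | ∑ i, z i = 1} :=
    isClosed_eq (continuous_finset_sum _ fun i _ => continuous_apply i) continuous_const
  exact h1.inter h2

lemma rowsum_bound (hn : 1 ≤ n) {B : Fin n → (Fin (k+1) → Fin n) → ℝ} (hB : ∀ i g, 0 ≤ B i g)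
    {z : Fin n → ℝ} (hz : ∀ i, 0 ≤ z i) (hzs : ∑ i, z i = 1) {lam : ℝ}
    (hlam : ∀ i, lam * z i ^ (k+1) ≤ tvec n k B z i) :
    lam ≤ ∑ i, ∑ g, B i g := by
  have hne : (Finset.univ : Finset (Fin n)).Nonempty := ⟨⟨0, hn⟩, Finset.mem_univ _⟩
  obtain ⟨i0, -, hi0⟩ := Finset.exists_max_image Finset.univ z hne
  have hzi0 : 0 < z i0 := by
    rcases lt_or_eq_of_le (hz i0) with h | h
    · exact h
    · exfalso
      have : ∀ i, z i = 0 := fun i => le_antisymm (h ▸ hi0 i (Finset.mem_univ _)) (hz i)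
      rw [Finset.sum_congr rfl fun i _ => this i] at hzs
      simpa using hzs
  have key : lam * z i0 ^ (k+1) ≤ (∑ g, B i0 g) * z i0 ^ (k+1) := by
    refine (hlam i0).trans ?_
    rw [show tvec n k B z i0 = ∑ g : Fin (k+1) → Fin n, B i0 g * ∏ j, z (g j) from rfl,
      Finset.sum_mul]
    refine Finset.sum_le_sum fun g _ => mul_le_mul_of_nonneg_left ?_ (hB i0 g)
    calc ∏ j, z (g j) ≤ ∏ j : Fin (k+1), z i0 :=
          Finset.prod_le_prod (fun j _ => hz _) (fun j _ => hi0 _ (Finset.mem_univ _))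
      _ = z i0 ^ (k+1) := by rw [Finset.prod_const, Finset.card_univ, Fintype.card_fin]
  have h2 : lam ≤ ∑ g, B i0 g := le_of_mul_le_mul_right key (pow_pos hzi0 _)
  exact h2.trans (Finset.single_le_sum (f := fun i => ∑ g, B i g)
    (fun i _ => Finset.sum_nonneg fun g _ => hB i g) (Finset.mem_univ i0))

end helpers2
section helpers3
variable {n k : ℕ}

set_option maxHeartbeats 1000000 in
lemma pos_tensor_eigen (hn : 1 ≤ n) {B : Fin n → (Fin (k+1) → Fin n) → ℝ} {ε : ℝ}
    (hε : 0 < ε) (hB : ∀ i g, ε ≤ B i g) :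
    ∃ z : Fin n → ℝ, ∃ ρ : ℝ, (∀ i, 0 < z i) ∧ (∑ i, z i = 1) ∧ 0 ≤ ρ ∧
      ∀ i, tvec n k B z i = ρ * z i ^ (k+1) := by
  classical
  have hBnn : ∀ i g, 0 ≤ B i g := fun i g => hε.le.trans (hB i g)
  set Δ : Set (Fin n → ℝ) := {z | (∀ i, 0 ≤ z i) ∧ ∑ i, z i = 1} with hΔ
  set S : Set ℝ := {lam | 0 ≤ lam ∧ ∃ z ∈ Δ, ∀ i, lam * z i ^ (k+1) ≤ tvec n k B z i} with hSdef
  have hnR : (0:ℝ) < n := by exact_mod_cast hn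
  have hz0Δ : (fun _ : Fin n => (n:ℝ)⁻¹) ∈ Δ := by
    constructor
    · intro i; positivity
    · rw [Finset.sum_const, Finset.card_univ, Fintype.card_fin]
      rw [nsmul_eq_mul, mul_inv_cancel₀ hnR.ne']
  have hS0 : (0:ℝ) ∈ S := ⟨le_refl 0, fun _ => (n:ℝ)⁻¹, hz0Δ, fun i => by
    simpa using tvec_nonneg hBnn (fun _ => by positivity) i⟩
  have hSbdd : BddAbove S := by
    refine ⟨∑ i, ∑ g, B i g, ?_⟩
    rintro lam ⟨hlam0, z, ⟨hz0, hz1⟩, hineq⟩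
    exact rowsum_bound hn hBnn hz0 hz1 hineq
  set ρ := sSup S with hρdef
  have hρ0 : 0 ≤ ρ := le_csSup hSbdd hS0
  obtain ⟨u, hu_mono, hu_tend, hu_mem⟩ := exists_seq_tendsto_sSup ⟨0, hS0⟩ hSbdd
  have hchoice : ∀ j : ℕ, ∃ z, z ∈ Δ ∧ ∀ i, u j * z i ^ (k+1) ≤ tvec n k B z i := by
    intro j
    obtain ⟨_, z, hzΔ, hineq⟩ := hu_mem j
    exact ⟨z, hzΔ, hineq⟩
  choose zs hzsΔ hzs using hchoice
  obtain ⟨zstar, hzstarΔ, φ, hφ, htend⟩ := simplex_compact.tendsto_subseq hzsΔ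
  obtain ⟨hzstar0, hzstar1⟩ := hzstarΔ
  have htendi : ∀ i, Filter.Tendsto (fun j => zs (φ j) i) Filter.atTop (nhds (zstar i)) :=
    fun i => ((continuous_apply i).continuousAt.tendsto).comp htend
  have htu : Filter.Tendsto (fun j => u (φ j)) Filter.atTop (nhds ρ) := by
    rw [hρdef]
    exact hu_tend.comp (StrictMono.tendsto_atTop hφ)
  have hkey : ∀ i, ρ * zstar i ^ (k+1) ≤ tvec n k B zstar i := by
    intro i
    have hf : Filter.Tendsto (fun j => u (φ j) * zs (φ j) i ^ (k+1)) Filter.atTop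
        (nhds (ρ * zstar i ^ (k+1))) := htu.mul ((htendi i).pow _)
    have hg : Filter.Tendsto (fun j => tvec n k B (zs (φ j)) i) Filter.atTop
        (nhds (tvec n k B zstar i)) :=
      ((tvec_continuous B i).continuousAt.tendsto).comp htend
    exact le_of_tendsto_of_tendsto' hf hg (fun j => hzs (φ j) i)
  have hscale : ∀ (lam : ℝ) (w : Fin n → ℝ), 0 ≤ lam → (∀ i, 0 ≤ w i) → (0 < ∑ i, w i) →
      (∀ i, lam * w i ^ (k+1) ≤ tvec n k B w i) → lam ∈ S := by
    intro lam w hlam hw hsw hineq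
    set c := (∑ i, w i)⁻¹ with hc
    have hc0 : 0 < c := by rw [hc]; positivity
    refine ⟨hlam, fun i => c * w i, ⟨fun i => mul_nonneg hc0.le (hw i), ?_⟩, fun i => ?_⟩
    · rw [← Finset.mul_sum, hc, inv_mul_cancel₀ (ne_of_gt hsw)]
    · rw [tvec_smul, mul_pow]
      calc lam * (c^(k+1) * w i ^(k+1)) = c^(k+1) * (lam * w i ^ (k+1)) := by ring
        _ ≤ c^(k+1) * tvec n k B w i :=
          mul_le_mul_of_nonneg_left (hineq i) (by positivity)
  by_cases hex : ∃ i, ρ * zstar i ^ (k+1) < tvec n k B zstar i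
  · -- contradiction branch
    exfalso
    obtain ⟨i0, hi0⟩ := hex
    set T : Finset (Fin n) :=
      Finset.univ.filter (fun i => ρ * zstar i ^ (k+1) < tvec n k B zstar i) with hT
    have hTne : T.Nonempty := ⟨i0, by simp [hT, hi0]⟩
    obtain ⟨i1, hi1T, hi1⟩ := Finset.exists_min_image T
      (fun i => tvec n k B zstar i - ρ * zstar i ^ (k+1)) hTne
    set c := tvec n k B zstar i1 - ρ * zstar i1 ^ (k+1) with hc
    have hc0 : 0 < c := by
      have := (Finset.mem_filter.1 hi1T).2
      rw [hc]; linarith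
    set K : ℝ := (k+1) * 2^(k+1) with hK
    have hK0 : 0 < K := by rw [hK]; positivity
    set t := min 1 (c / (2 * (ρ * K + 1))) with ht
    have ht0 : 0 < t := lt_min one_pos (by positivity)
    have ht1 : t ≤ 1 := min_le_left _ _
    have htρ : ρ * K * t ≤ c / 2 := by
      have h1 : t ≤ c / (2 * (ρ * K + 1)) := min_le_right _ _
      have h2 : ρ * K * t ≤ (ρ * K + 1) * t := by nlinarith
      have h3 : (ρ * K + 1) * t ≤ (ρ * K + 1) * (c / (2 * (ρ * K + 1))) :=
        mul_le_mul_of_nonneg_left h1 (by positivity)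
      have h4 : (ρ * K + 1) * (c / (2 * (ρ * K + 1))) = c / 2 := by
        field_simp
      linarith
    set δ := min (ε * t^(k+1)) (c / (2 * 2^(k+1))) with hδ
    have hδ0 : 0 < δ := lt_min (by positivity) (by positivity)
    set z' := fun i => zstar i + (if i ∈ T then t else 0) with hz'
    have hz'ge : ∀ i, zstar i ≤ z' i := fun i => by
      simp only [hz']; split <;> linarith
    have hz'0 : ∀ i, 0 ≤ z' i := fun i => (hzstar0 i).trans (hz'ge i)
    have hzstarle1 : ∀ i, zstar i ≤ 1 := fun i => by
      calc zstar i ≤ ∑ j, zstar j :=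
            Finset.single_le_sum (fun j _ => hzstar0 j) (Finset.mem_univ i)
        _ = 1 := hzstar1
    have hz'le2 : ∀ i, z' i ≤ 2 := fun i => by
      simp only [hz']; split
      · linarith [hzstarle1 i]
      · linarith [hzstarle1 i]
    have hsum' : 0 < ∑ i, z' i := by
      have hle := Finset.sum_le_sum (fun i (_ : i ∈ Finset.univ) => hz'ge i)
      rw [hzstar1] at hle
      linarith
    have hgain : ∀ i, tvec n k B zstar i + ε * t^(k+1) ≤ tvec n k B z' i := by
      intro i
      have hsub : tvec n k B z' i - tvec n k B zstar i =
          ∑ g : Fin (k+1) → Fin n, (B i g * ∏ j, z' (g j) - B i g * ∏ j, zstar (g j)) := by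
        rw [Finset.sum_sub_distrib]; rfl
      have hterm_nn : ∀ g : Fin (k+1) → Fin n,
          0 ≤ B i g * ∏ j, z' (g j) - B i g * ∏ j, zstar (g j) := by
        intro g
        have hpr : ∏ j : Fin (k+1), zstar (g j) ≤ ∏ j : Fin (k+1), z' (g j) :=
          Finset.prod_le_prod (fun j _ => hzstar0 (g j)) (fun j _ => hz'ge (g j))
        exact sub_nonneg.2 (mul_le_mul_of_nonneg_left hpr (hBnn i g))
      have hsingle : B i (fun _ => i1) * (z' i1)^(k+1)
            - B i (fun _ => i1) * (zstar i1)^(k+1)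
          ≤ tvec n k B z' i - tvec n k B zstar i := by
        have h6 := Finset.single_le_sum
          (f := fun g : Fin (k+1) → Fin n =>
            B i g * ∏ j, z' (g j) - B i g * ∏ j, zstar (g j))
          (fun g _ => hterm_nn g) (Finset.mem_univ (fun _ => i1))
        simpa [Finset.prod_const, Finset.card_univ, Fintype.card_fin, ← hsub] using h6
      have hzi1 : z' i1 = zstar i1 + t := by simp [hz', hi1T]
      rw [hzi1] at hsingle
      have hpow : zstar i1 ^ (k+1) + t^(k+1) ≤ (zstar i1 + t)^(k+1) :=
        pow_add_pow_le (hzstar0 i1) ht0.le (Nat.succ_ne_zero k)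
      have hBi : ε ≤ B i (fun _ => i1) := hB i _
      have hstep : ε * t^(k+1) ≤
          B i (fun _ => i1) * ((zstar i1 + t)^(k+1) - zstar i1^(k+1)) := by
        have h5 : t^(k+1) ≤ (zstar i1 + t)^(k+1) - zstar i1^(k+1) := by linarith
        calc ε * t^(k+1) ≤ B i (fun _ => i1) * t^(k+1) :=
              mul_le_mul_of_nonneg_right hBi (by positivity)
          _ ≤ _ := mul_le_mul_of_nonneg_left h5 (hBnn i _)
      linarith [hsingle, hstep]
    have hmain : ∀ i, (ρ + δ) * z' i ^ (k+1) ≤ tvec n k B z' i := by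
      intro i
      by_cases hiT : i ∈ T
      · have hzi : z' i = zstar i + t := by simp [hz', hiT]
        have hcle : c ≤ tvec n k B zstar i - ρ * zstar i ^ (k+1) := hi1 i hiT
        have hpow2 : (zstar i + t)^(k+1) ≤ zstar i^(k+1) + K * t := by
          have := pow_add_le_aux (k+1) (hzstar0 i) (hzstarle1 i) ht0.le ht1
          rw [hK]
          push_cast
          push_cast at this
          linarith
        have hpow3 : (zstar i + t)^(k+1) ≤ 2^(k+1) := by
          have h2 : zstar i + t ≤ 2 := by
            rw [← hzi]; exact hz'le2 i
          exact pow_le_pow_left₀ (by linarith [hzstar0 i, ht0.le]) h2 _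
        have hδ2 : δ * 2^(k+1) ≤ c / 2 := by
          have hδle : δ ≤ c / (2 * 2^(k+1)) := min_le_right _ _
          have h2p : (0:ℝ) < 2^(k+1) := by positivity
          calc δ * 2^(k+1) ≤ (c / (2*2^(k+1))) * 2^(k+1) :=
                mul_le_mul_of_nonneg_right hδle h2p.le
            _ = c/2 := by field_simp
        rw [hzi]
        have e1 : ρ * (zstar i + t)^(k+1) ≤ ρ * (zstar i ^(k+1) + K * t) :=
          mul_le_mul_of_nonneg_left hpow2 hρ0
        have e2 : δ * (zstar i + t)^(k+1) ≤ δ * 2^(k+1) :=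
          mul_le_mul_of_nonneg_left hpow3 hδ0.le
        have e3 : tvec n k B zstar i ≤ tvec n k B z' i := by
          linarith [hgain i, mul_pos hε (pow_pos ht0 (k+1))]
        linarith [e1, e2, e3, htρ, hcle, hδ2]
      · have hzi : z' i = zstar i := by simp [hz', hiT]
        have heqi : tvec n k B zstar i = ρ * zstar i ^ (k+1) := by
          by_contra hne
          exact hiT (Finset.mem_filter.2 ⟨Finset.mem_univ i,
            lt_of_le_of_ne (hkey i) (fun h => hne h.symm)⟩)
        have hδε : δ ≤ ε * t^(k+1) := min_le_left _ _
        have hz1 : zstar i ^ (k+1) ≤ 1 := pow_le_one₀ (hzstar0 i) (hzstarle1 i)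
        rw [hzi]
        have hg := hgain i
        linarith [mul_le_mul_of_nonneg_left hz1 hδ0.le, pow_nonneg (hzstar0 i) (k+1)]
    have hmem : ρ + δ ∈ S := hscale (ρ+δ) z' (by linarith) hz'0 hsum' hmain
    have hle : ρ + δ ≤ ρ := by
      rw [hρdef]
      exact le_csSup hSbdd hmem
    linarith
  · push_neg at hex
    have heq : ∀ i, tvec n k B zstar i = ρ * zstar i ^ (k+1) := fun i =>
      le_antisymm (hex i) (hkey i)
    have hpos : ∀ i, 0 < zstar i := by
      intro i
      rcases lt_or_eq_of_le (hzstar0 i) with h | h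
      · exact h
      · exfalso
        obtain ⟨p0, hp0⟩ : ∃ p0, 0 < zstar p0 := by
          by_contra hall
          push_neg at hall
          have hz0 : ∀ i, zstar i = 0 := fun i => le_antisymm (hall i) (hzstar0 i)
          rw [Finset.sum_congr rfl fun i _ => hz0 i] at hzstar1
          simpa using hzstar1
        have hterm : ε * zstar p0 ^ (k+1) ≤ tvec n k B zstar i := by
          have h1 : ε * zstar p0 ^ (k+1) ≤ B i (fun _ => p0) * ∏ _j : Fin (k+1), zstar p0 := by
            rw [Finset.prod_const, Finset.card_univ, Fintype.card_fin]
            exact mul_le_mul_of_nonneg_right (hB i _) (by positivity)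
          refine h1.trans ?_
          exact Finset.single_le_sum (f := fun g => B i g * ∏ j, zstar (g j))
            (fun g _ => mul_nonneg (hBnn i g) (Finset.prod_nonneg fun j _ => hzstar0 _))
            (Finset.mem_univ (fun _ => p0))
        rw [heq i, ← h, zero_pow (Nat.succ_ne_zero k), mul_zero] at hterm
        nlinarith [pow_pos hp0 (k+1)]
    exact ⟨zstar, ρ, hpos, hzstar1, hρ0, heq⟩

end helpers3
section helpers4
variable {n k : ℕ}

set_option maxHeartbeats 1000000 in
lemma semipositive (hn : 1 ≤ n) {B : Fin n → (Fin (k+1) → Fin n) → ℝ}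
    (hB : NonnegT n k B) {s : ℝ} (hs : specRad n k B < s) :
    ∃ z : Fin n → ℝ, ∃ ρ : ℝ, (∀ i, 0 < z i) ∧ 0 ≤ ρ ∧ ρ < s ∧
      ∀ i, tvec n k B z i ≤ ρ * z i ^ (k+1) := by
  classical
  -- perturbed tensors
  set Bp : ℕ → Fin n → (Fin (k+1) → Fin n) → ℝ :=
    fun j i g => B i g + 1/(j+1) with hBp
  have hBppos : ∀ j : ℕ, ∀ i g, (1:ℝ)/(j+1) ≤ Bp j i g := fun j i g => by
    have := hB i g
    simp only [hBp]
    linarith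
  have hεpos : ∀ j : ℕ, (0:ℝ) < 1/(j+1) := fun j => by positivity
  have hex := fun j : ℕ => pos_tensor_eigen hn (hεpos j) (hBppos j)
  choose zs ρs hzs_pos hzs_sum hρs_nn hzs_eig using hex
  -- eigen equation in terms of B
  have heig : ∀ j i, ρs j * zs j i ^ (k+1) = tvec n k B (zs j) i + 1/(j+1) := by
    intro j i
    have h1 := hzs_eig j i
    have h2 : tvec n k (Bp j) (zs j) i
        = tvec n k B (zs j) i + (1/(j+1)) * (∑ l, zs j l)^(k+1) :=
      tvec_addconst B (1/(j+1)) (zs j) i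
    rw [hzs_sum j, one_pow, mul_one] at h2
    rw [← h1, h2]
  -- bound on ρs
  set C : ℝ := ∑ i, ∑ g : Fin (k+1) → Fin n, (B i g + 1) with hC
  have hρs_le : ∀ j, ρs j ≤ C := by
    intro j
    have h1 : ρs j ≤ ∑ i, ∑ g : Fin (k+1) → Fin n, Bp j i g := by
      refine rowsum_bound hn (fun i g => ((hεpos j).le.trans (hBppos j i g)))
        (fun i => (hzs_pos j i).le) (hzs_sum j) (fun i => (hzs_eig j i).ge)
    refine h1.trans (Finset.sum_le_sum fun i _ => Finset.sum_le_sum fun g _ => ?_)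
    simp only [hBp, hC]
    have h2 : (1:ℝ)/(j+1) ≤ 1 := by
      rw [div_le_one (by positivity)]
      simp
    linarith
  -- compactness
  have hzsΔ : ∀ j, zs j ∈ {z : Fin n → ℝ | (∀ i, 0 ≤ z i) ∧ ∑ i, z i = 1} :=
    fun j => ⟨fun i => (hzs_pos j i).le, hzs_sum j⟩
  obtain ⟨zstar, hzstarΔ, φ, hφ, htend⟩ := simplex_compact.tendsto_subseq hzsΔ
  obtain ⟨hz0, hz1⟩ := hzstarΔ
  have hρmem : ∀ j, ρs (φ j) ∈ Set.Icc (0:ℝ) C := fun j => ⟨hρs_nn _, hρs_le _⟩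
  obtain ⟨ρbar, hρbarI, ψ, hψ, htendρ⟩ := (isCompact_Icc).tendsto_subseq hρmem
  set σ : ℕ → ℕ := φ ∘ ψ with hσ
  have hσmono : StrictMono σ := hφ.comp hψ
  have htendz : Filter.Tendsto (fun j => zs (σ j)) Filter.atTop (nhds zstar) := by
    have := htend.comp (StrictMono.tendsto_atTop hψ)
    exact this
  have htendρ2 : Filter.Tendsto (fun j => ρs (σ j)) Filter.atTop (nhds ρbar) := htendρ
  have htendzi : ∀ i, Filter.Tendsto (fun j => zs (σ j) i) Filter.atTop (nhds (zstar i)) :=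
    fun i => ((continuous_apply i).continuousAt.tendsto).comp htendz
  -- limit equation
  have hlim : ∀ i, ρbar * zstar i ^ (k+1) = tvec n k B zstar i := by
    intro i
    have hL : Filter.Tendsto (fun j => ρs (σ j) * zs (σ j) i ^ (k+1)) Filter.atTop
        (nhds (ρbar * zstar i ^ (k+1))) := htendρ2.mul ((htendzi i).pow _)
    have hR : Filter.Tendsto (fun j => tvec n k B (zs (σ j)) i + 1/(σ j + 1))
        Filter.atTop (nhds (tvec n k B zstar i + 0)) := by
      refine Filter.Tendsto.add
        (((tvec_continuous B i).continuousAt.tendsto).comp htendz) ?_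
      have h0 : Filter.Tendsto (fun j : ℕ => 1/((j:ℝ) + 1)) Filter.atTop (nhds 0) :=
        tendsto_one_div_add_atTop_nhds_zero_nat
      exact h0.comp (StrictMono.tendsto_atTop hσmono)
    rw [add_zero] at hR
    have hEq : (fun j => ρs (σ j) * zs (σ j) i ^ (k+1))
        = fun j => tvec n k B (zs (σ j)) i + 1/(σ j + 1) := by
      funext j
      have := heig (σ j) i
      push_cast at this ⊢
      linarith
    rw [hEq] at hL
    exact tendsto_nhds_unique hL hR
  -- ρbar is an eigenvalue, hence < s
  have hz0ne : zstar ≠ 0 := by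
    intro hcon
    rw [hcon] at hz1
    simpa using hz1
  have hρbar_le : ρbar ≤ specRad n k B :=
    specRad_ge hn B hρbarI.1 hz0ne (fun i => (hlim i).symm)
  have hρbar_lt : ρbar < s := lt_of_le_of_lt hρbar_le hs
  -- pick an index far enough
  have hev : ∀ᶠ j in Filter.atTop, ρs (σ j) < s := htendρ2.eventually_lt_const hρbar_lt
  obtain ⟨j0, hj0⟩ := hev.exists
  refine ⟨zs (σ j0), ρs (σ j0), hzs_pos _, hρs_nn _, hj0, fun i => ?_⟩
  have h1 := heig (σ j0) i
  have h2 : (0:ℝ) < 1/((σ j0 : ℝ)+1) := by positivity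
  push_cast at h1
  linarith
end helpers4
section helpers5
variable {n k : ℕ}

lemma mtensor_le (hn : 1 ≤ n) {C : Fin n → (Fin (k+1) → Fin n) → ℝ}
    (hC : ∀ i g, 0 ≤ C i g) {σ : ℝ} {b : Fin n → ℝ} (hb : ∀ i, 0 < b i)
    {x y : Fin n → ℝ} (hx : ∀ i, 0 < x i) (hy : ∀ i, 0 < y i)
    (hex : ∀ i, σ * x i ^ (k+1) = b i + tvec n k C x i)
    (hey : ∀ i, σ * y i ^ (k+1) = b i + tvec n k C y i) :
    ∀ i, y i ≤ x i := by
  have hne : (Finset.univ : Finset (Fin n)).Nonempty := ⟨⟨0, hn⟩, Finset.mem_univ _⟩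
  obtain ⟨i0, -, hi0⟩ := Finset.exists_max_image Finset.univ (fun i => y i / x i) hne
  set τ := y i0 / x i0 with hτ
  have hτ0 : 0 < τ := div_pos (hy i0) (hx i0)
  have hyx : ∀ i, y i ≤ τ * x i := by
    intro i
    have h1 : y i / x i ≤ τ := hi0 i (Finset.mem_univ _)
    rw [div_le_iff₀ (hx i)] at h1
    linarith [h1]
  have hyi0 : y i0 = τ * x i0 := by
    rw [hτ, div_mul_cancel₀ _ (ne_of_gt (hx i0))]
  have hCy : tvec n k C y i0 ≤ τ^(k+1) * tvec n k C x i0 := by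
    rw [← tvec_smul]
    exact tvec_mono hC (fun i => (hy i).le) hyx i0
  have hkey : b i0 + tvec n k C y i0 = τ^(k+1) * (b i0 + tvec n k C x i0) := by
    rw [← hex i0, ← hey i0, hyi0, mul_pow]
    ring
  have hτle : τ^(k+1) ≤ 1 := by
    nlinarith [hb i0, hCy, hkey]
  have hτ1 : τ ≤ 1 := by
    by_contra hcon
    push_neg at hcon
    have : (1:ℝ) < τ^(k+1) := one_lt_pow₀ hcon (Nat.succ_ne_zero k)
    linarith
  intro i
  calc y i ≤ τ * x i := hyx i
    _ ≤ 1 * x i := mul_le_mul_of_nonneg_right hτ1 (hx i).le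
    _ = x i := one_mul _

set_option maxHeartbeats 1000000 in
lemma mtensor_solve (hn : 1 ≤ n) {C : Fin n → (Fin (k+1) → Fin n) → ℝ}
    (hC : ∀ i g, 0 ≤ C i g) {σ : ℝ} {z : Fin n → ℝ} (hz : ∀ i, 0 < z i)
    (hsp : ∀ i, tvec n k C z i < σ * z i ^ (k+1))
    {b : Fin n → ℝ} (hb : ∀ i, 0 < b i) :
    ∃! x : Fin n → ℝ, (∀ i, 0 < x i) ∧
      ∀ i, σ * x i ^ (k+1) = b i + tvec n k C x i := by
  classical
  have i00 : Fin n := ⟨0, hn⟩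
  have hσ0 : 0 < σ := by
    have h1 := hsp i00
    have h2 := tvec_nonneg hC (fun i => (hz i).le) i00
    nlinarith [pow_pos (hz i00) (k+1)]
  set d := fun i => σ * z i ^ (k+1) - tvec n k C z i with hd
  have hd0 : ∀ i, 0 < d i := fun i => by
    have := hsp i
    simp only [hd]
    linarith
  have hne : (Finset.univ : Finset (Fin n)).Nonempty := ⟨i00, Finset.mem_univ _⟩
  obtain ⟨i1, -, hi1⟩ := Finset.exists_max_image Finset.univ (fun i => b i / d i) hne
  set c := max 1 (b i1 / d i1) with hc
  have hc1 : (1:ℝ) ≤ c := le_max_left _ _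
  have hc0 : 0 < c := lt_of_lt_of_le one_pos hc1
  have hcb : ∀ i, b i ≤ c^(k+1) * d i := by
    intro i
    have h1 : b i / d i ≤ c := ((hi1 i (Finset.mem_univ _)).trans (le_max_right _ _))
    have h2 : b i ≤ c * d i := by
      rw [div_le_iff₀ (hd0 i)] at h1
      linarith
    have h3 : c ≤ c^(k+1) := le_self_pow₀ hc1 (Nat.succ_ne_zero k)
    nlinarith [hd0 i]
  set w := fun i => c * z i with hw
  have hw0 : ∀ i, 0 < w i := fun i => mul_pos hc0 (hz i)
  have hwsup : ∀ i, b i + tvec n k C w i ≤ σ * w i ^ (k+1) := by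
    intro i
    have h1 : tvec n k C w i = c^(k+1) * tvec n k C z i := tvec_smul C c z i
    have h2 : σ * w i ^ (k+1) = c^(k+1) * (σ * z i ^ (k+1)) := by
      simp only [hw, mul_pow]
      ring
    have h3 := hcb i
    simp only [hd] at h3
    rw [h1, h2]
    nlinarith
  -- iteration map
  set F : (Fin n → ℝ) → (Fin n → ℝ) :=
    fun y i => ((b i + tvec n k C y i)/σ) ^ ((k+1 : ℝ)⁻¹) with hF
  have hFpos : ∀ y : Fin n → ℝ, (∀ i, 0 ≤ y i) → ∀ i, 0 < F y i := by
    intro y hy i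
    have h1 : 0 < (b i + tvec n k C y i)/σ :=
      div_pos (by linarith [hb i, tvec_nonneg hC hy i]) hσ0
    exact Real.rpow_pos_of_pos h1 _
  have hFmono : ∀ u v : Fin n → ℝ, (∀ i, 0 ≤ u i) → (∀ i, u i ≤ v i) →
      ∀ i, F u i ≤ F v i := by
    intro u v hu huv i
    refine Real.rpow_le_rpow ?_ ?_ (by positivity)
    · have := tvec_nonneg hC hu i
      have := hb i
      positivity
    · exact (div_le_div_iff_of_pos_right hσ0).mpr
        (by linarith [tvec_mono hC hu huv i])
  -- F y = y at a point characterization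
  have hFfix : ∀ y : Fin n → ℝ, (∀ i, 0 ≤ y i) → ∀ i, F y i = y i →
      σ * y i ^ (k+1) = b i + tvec n k C y i := by
    intro y hy i hfix
    have hbase : 0 < (b i + tvec n k C y i)/σ :=
      div_pos (by linarith [hb i, tvec_nonneg hC hy i]) hσ0
    have h1 : (F y i) ^ (k+1) = (b i + tvec n k C y i)/σ := by
      simp only [hF]
      rw [← Real.rpow_natCast (((b i + tvec n k C y i)/σ) ^ ((k+1:ℝ)⁻¹)) (k+1),
        ← Real.rpow_mul hbase.le]
      push_cast
      rw [inv_mul_cancel₀ (by positivity : ((k:ℝ)+1) ≠ 0), Real.rpow_one]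
    rw [hfix] at h1
    rw [h1]
    field_simp
  -- the iteration sequence
  set xs : ℕ → Fin n → ℝ := fun j => F^[j] w with hxs
  have hxs_succ : ∀ j, xs (j+1) = F (xs j) := by
    intro j
    simp only [hxs, Function.iterate_succ_apply']
  have hxs_zero : xs 0 = w := rfl
  have hxs_facts : ∀ j, (∀ i, 0 < xs j i) ∧ (∀ i, xs (j+1) i ≤ xs j i) := by
    intro j
    induction j with
    | zero =>
      refine ⟨hw0, ?_⟩
      intro i
      rw [hxs_succ 0, hxs_zero]
      have hbase : (b i + tvec n k C w i)/σ ≤ w i ^ (k+1) := by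
        rw [div_le_iff₀ hσ0]
        linarith [hwsup i]
      have h2 : F w i ≤ (w i ^ (k+1)) ^ ((k+1:ℝ)⁻¹) := by
        refine Real.rpow_le_rpow ?_ hbase (by positivity)
        have := tvec_nonneg hC (fun i => (hw0 i).le) i
        have := hb i
        positivity
      have hexp : ((k+1 : ℕ) : ℝ) * ((k:ℝ)+1)⁻¹ = 1 := by
        push_cast
        field_simp
      rwa [← Real.rpow_natCast (w i) (k+1), ← Real.rpow_mul (hw0 i).le,
        hexp, Real.rpow_one] at h2
    | succ j ih =>
      obtain ⟨hpos, hdec⟩ := ih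
      have hpos' : ∀ i, 0 < xs (j+1) i := by
        rw [hxs_succ]
        exact hFpos (xs j) (fun i => (hpos i).le)
      refine ⟨hpos', ?_⟩
      intro i
      rw [hxs_succ (j+1)]
      calc F (xs (j+1)) i ≤ F (xs j) i :=
            hFmono (xs (j+1)) (xs j) (fun i => (hpos' i).le) hdec i
        _ = xs (j+1) i := (congrFun (hxs_succ j) i).symm
  have hxs_pos : ∀ j i, 0 < xs j i := fun j => (hxs_facts j).1
  have hxs_anti : ∀ i, Antitone (fun j => xs j i) :=
    fun i => antitone_nat_of_succ_le (fun j => (hxs_facts j).2 i)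
  -- limit
  set xl : Fin n → ℝ := fun i => ⨅ j, xs j i with hxl
  have hbdd : ∀ i, BddBelow (Set.range fun j => xs j i) :=
    fun i => ⟨0, by rintro r ⟨j, rfl⟩; exact (hxs_pos j i).le⟩
  have htendi : ∀ i, Filter.Tendsto (fun j => xs j i) Filter.atTop (nhds (xl i)) :=
    fun i => tendsto_atTop_ciInf (hxs_anti i) (hbdd i)
  have hxl0 : ∀ i, 0 ≤ xl i := fun i =>
    le_ciInf (fun j => (hxs_pos j i).le)
  have htend : Filter.Tendsto xs Filter.atTop (nhds xl) :=
    tendsto_pi_nhds.2 htendi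
  have hfix : ∀ i, F xl i = xl i := by
    intro i
    have hL : Filter.Tendsto (fun j => xs (j+1) i) Filter.atTop (nhds (xl i)) :=
      (htendi i).comp (Filter.tendsto_add_atTop_nat 1)
    have hbase_pos : 0 < (b i + tvec n k C xl i)/σ :=
      div_pos (by linarith [hb i, tvec_nonneg hC hxl0 i]) hσ0
    have hR : Filter.Tendsto (fun j => F (xs j) i) Filter.atTop (nhds (F xl i)) := by
      have hinner : Filter.Tendsto (fun j => (b i + tvec n k C (xs j) i)/σ)
          Filter.atTop (nhds ((b i + tvec n k C xl i)/σ)) := by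
        refine Filter.Tendsto.div_const ?_ σ
        exact (continuous_const.add (tvec_continuous C i)).continuousAt.tendsto.comp htend
      have houter : ContinuousAt (fun r : ℝ => r ^ ((k+1:ℝ)⁻¹))
          ((b i + tvec n k C xl i)/σ) :=
        Real.continuousAt_rpow_const _ _ (Or.inl (ne_of_gt hbase_pos))
      exact houter.tendsto.comp hinner
    have heq : (fun j => xs (j+1) i) = fun j => F (xs j) i := by
      funext j
      rw [hxs_succ j]
    rw [heq] at hL
    exact tendsto_nhds_unique hR hL
  have hxl_pos : ∀ i, 0 < xl i := by
    intro i
    rw [← hfix i]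
    exact hFpos xl hxl0 i
  have hxl_eq : ∀ i, σ * xl i ^ (k+1) = b i + tvec n k C xl i :=
    fun i => hFfix xl hxl0 i (hfix i)
  refine ⟨xl, ⟨hxl_pos, hxl_eq⟩, ?_⟩
  rintro y ⟨hy_pos, hy_eq⟩
  have h1 := mtensor_le hn hC hb hxl_pos hy_pos hxl_eq hy_eq
  have h2 := mtensor_le hn hC hb hy_pos hxl_pos hy_eq hxl_eq
  funext i
  exact le_antisymm (h1 i) (h2 i)
end helpers5

/-- For a nonsingular M-tensor `A` and positive `b`, there is `τ₀ > 0` such that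
for each `t ∈ [0, 1 + τ₀)` the system `(t A + (1 - t) I) x^{m-1} = b` has a unique positive
solution. -/
theorem homotopy_unique_positive_solution (k n : ℕ) (hn : 1 ≤ n)
    (A : Fin n → (Fin (k + 1) → Fin n) → ℝ) (hA : IsNsMTensor n k A)
    (b : Fin n → ℝ) (hb : ∀ i, 0 < b i) :
    ∃ τ₀ : ℝ, 0 < τ₀ ∧ ∀ t ∈ Set.Ico (0 : ℝ) (1 + τ₀),
      ∃! x : Fin n → ℝ, (∀ i, 0 < x i) ∧
        tvec n k (fun i g => t * A i g + (1 - t) * idT n k i g) x = b := by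
  obtain ⟨s, B, hBnn, hρs, hAeq⟩ := hA
  obtain ⟨z, ρ, hz_pos, hρ0, hρlt, hzineq⟩ := semipositive hn hBnn hρs
  set q := ρ - s + 1 with hq
  have hq1 : q < 1 := by rw [hq]; linarith
  have hτ : ∃ τ₀ : ℝ, 0 < τ₀ ∧ ∀ t, 0 ≤ t → t < 1 + τ₀ → t * q < 1 := by
    by_cases hqle : q ≤ 0
    · exact ⟨1, one_pos, fun t ht0 _ =>
        lt_of_le_of_lt (mul_nonpos_of_nonneg_of_nonpos ht0 hqle) one_pos⟩
    · push_neg at hqle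
      refine ⟨1/q - 1, by linarith [one_lt_one_div hqle hq1], fun t ht0 ht1 => ?_⟩
      have h2 : t < 1/q := by linarith
      calc t * q < (1/q) * q := mul_lt_mul_of_pos_right h2 hqle
        _ = 1 := by field_simp
  obtain ⟨τ₀, hτ0, hτq⟩ := hτ
  refine ⟨τ₀, hτ0, ?_⟩
  rintro t ⟨ht0, ht1⟩
  set σt := 1 + t*(s-1) with hσt
  set Ct : Fin n → (Fin (k+1) → Fin n) → ℝ := fun i g => t * B i g with hCt
  have hCtnn : ∀ i g, 0 ≤ Ct i g := fun i g => mul_nonneg ht0 (hBnn i g)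
  have htq : t * ρ < σt := by
    have h1 := hτq t ht0 ht1
    rw [hq] at h1
    have h2 : t*(ρ-s+1) = t*ρ - t*s + t := by ring
    rw [hσt]
    nlinarith
  have hsp : ∀ i, tvec n k Ct z i < σt * z i ^ (k+1) := by
    intro i
    rw [hCt, tvec_cmul]
    calc t * tvec n k B z i ≤ t * (ρ * z i ^ (k+1)) :=
          mul_le_mul_of_nonneg_left (hzineq i) ht0
      _ = (t * ρ) * z i ^(k+1) := by ring
      _ < σt * z i ^ (k+1) := mul_lt_mul_of_pos_right htq (pow_pos (hz_pos i) _)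
  obtain ⟨x, ⟨hx_pos, hx_eq⟩, hx_uniq⟩ := mtensor_solve hn hCtnn hz_pos hsp hb
  set M : Fin n → (Fin (k+1) → Fin n) → ℝ :=
    fun i g => t * A i g + (1 - t) * idT n k i g with hM
  have hMvec : ∀ (y : Fin n → ℝ) (i : Fin n),
      tvec n k M y i = σt * y i ^ (k+1) - tvec n k Ct y i := by
    intro y i
    have hMeq : M = fun i g => σt * idT n k i g + (-1) * Ct i g := by
      funext i g
      simp only [hM, hAeq, hσt, hCt]
      ring
    rw [hMeq, tvec_combo, tvec_idT]
    ring
  have hcond : ∀ y : Fin n → ℝ,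
      (tvec n k M y = b) ↔ (∀ i, σt * y i ^ (k+1) = b i + tvec n k Ct y i) := by
    intro y
    rw [funext_iff]
    constructor
    · intro h i
      have := h i
      rw [hMvec y i] at this
      linarith
    · intro h i
      rw [hMvec y i]
      have := h i
      linarith
  refine ⟨x, ⟨hx_pos, (hcond x).2 hx_eq⟩, ?_⟩
  rintro y ⟨hy_pos, hy_eq⟩
  exact hx_uniq y ⟨hy_pos, (hcond y).1 hy_eq⟩
end

section
/- Let m ≥ 2 and n ≥ 1. Suppose A ∈ ℝ^{[m,n]} is a nonsingular M-tensor and b ∈ ℝⁿ is a positive vector. Then there exists a real number τ₀ > 0 such that for every t ∈ [0, 1+τ₀) and every positive vector x ∈ ℝⁿ satisfying (t A + (1−t) I) x^{m-1} = b, the n×n matrix (m−1)·((t Â + (1−t) I) x^{m-2}) is nonsingular (invertible). -/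
open Finset Matrix

lemma tmat_mulVec (n k : ℕ) (T : Fin n → (Fin (k+1) → Fin n) → ℝ) (x : Fin n → ℝ) :
    (tmat n k T x) *ᵥ x = tvec n k T x := by
  funext i
  simp only [tmat, tvec, mulVec, dotProduct]
  rw [Fintype.sum_equiv (Fin.consEquiv (fun _ : Fin (k+1) => Fin n)).symm
    (fun g => T i g * ∏ j, x (g j))
    (fun p => T i (Fin.cons p.1 p.2) * (x p.1 * ∏ l, x (p.2 l)))
    ?_]
  · rw [Fintype.sum_prod_type]
    refine Finset.sum_congr rfl fun j _ => ?_
    rw [Finset.sum_mul]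
    refine Finset.sum_congr rfl fun h _ => ?_
    ring
  · intro g
    simp only [Fin.consEquiv, Equiv.coe_fn_symm_mk]
    congr 1
    · congr 1
      exact (Fin.cons_self_tail g).symm
    · rw [Fin.prod_univ_succ]
      rfl

lemma tvec_psym (n k : ℕ) (A : Fin n → (Fin (k+1) → Fin n) → ℝ) (x : Fin n → ℝ) :
    tvec n k (psym n k A) x = tvec n k A x := by
  funext i
  simp only [tvec, psym]
  have key : ∀ π : Equiv.Perm (Fin (k+1)),
      ∑ g : Fin (k+1) → Fin n, A i (g ∘ π) * ∏ j, x (g j)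
      = ∑ g : Fin (k+1) → Fin n, A i g * ∏ j, x (g j) := by
    intro π
    refine Fintype.sum_equiv (Equiv.arrowCongr π.symm (Equiv.refl (Fin n)))
      _ _ fun g => ?_
    have he : (Equiv.arrowCongr π.symm (Equiv.refl (Fin n))) g = g ∘ π := by
      funext l; simp
    rw [he]
    congr 1
    exact (Equiv.prod_comp π fun j => x (g j)).symm
  simp_rw [mul_assoc, Finset.sum_mul, ← Finset.mul_sum]
  rw [Finset.sum_comm]
  rw [Finset.sum_congr rfl fun π _ => key π]
  rw [Finset.sum_const, card_univ, Fintype.card_perm, Fintype.card_fin, nsmul_eq_mul,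
    ← mul_assoc, one_div, inv_mul_cancel₀ (by exact_mod_cast (Nat.factorial_pos (k+1)).ne'),
    one_mul]


/-- For a nonsingular M-tensor `A` and positive `b`, there is `τ₀ > 0` such that
for each `t ∈ [0, 1 + τ₀)` and each positive solution `x` of `(t A + (1 - t) I) x^{m-1} = b`,
the matrix `(m - 1) (t Â + (1 - t) I) x^{m-2}` is invertible. -/
theorem homotopy_jacobian_invertible (k n : ℕ) (hn : 1 ≤ n)
    (A : Fin n → (Fin (k + 1) → Fin n) → ℝ) (hA : IsNsMTensor n k A)
    (b : Fin n → ℝ) (hb : ∀ i, 0 < b i) :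
    ∃ τ₀ : ℝ, 0 < τ₀ ∧ ∀ t ∈ Set.Ico (0 : ℝ) (1 + τ₀), ∀ x : Fin n → ℝ,
      (∀ i, 0 < x i) →
      tvec n k (fun i g => t * A i g + (1 - t) * idT n k i g) x = b →
      IsUnit (((k : ℝ) + 1) •
        tmat n k (fun i g => t * psym n k A i g + (1 - t) * idT n k i g) x) := by
  obtain ⟨s, B, hBnn, -, hAeq⟩ := hA
  refine ⟨1, one_pos, fun t ht x hx hsol => ?_⟩
  have ht0 : 0 ≤ t := ht.1
  set C' : Fin n → (Fin (k+1) → Fin n) → ℝ :=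
    fun i g => t * psym n k A i g + (1 - t) * idT n k i g with hC'
  set M := tmat n k C' x with hM
  have hMx : M *ᵥ x = b := by
    rw [hM, tmat_mulVec, ← hsol]
    funext i
    have hps := congrFun (tvec_psym n k A x) i
    simp only [tvec] at hps ⊢
    simp_rw [hC', add_mul, mul_assoc]
    rw [Finset.sum_add_distrib, Finset.sum_add_distrib, ← Finset.mul_sum, ← Finset.mul_sum,
      hps, Finset.mul_sum]
  have hoff : ∀ i j, i ≠ j → M i j ≤ 0 := by
    intro i j hij
    rw [hM]
    apply Finset.sum_nonpos
    intro h _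
    have hid : idT n k i (Fin.cons j h) = 0 := by
      simp only [idT, if_neg]
      rw [if_neg]
      intro hc
      exact hij ((hc 0).symm)
    have hpsym : psym n k A i (Fin.cons j h) ≤ 0 := by
      simp only [psym]
      apply mul_nonpos_of_nonneg_of_nonpos (by positivity)
      apply Finset.sum_nonpos
      intro π _
      rw [hAeq]
      simp only
      have hid2 : idT n k i (Fin.cons j h ∘ π) = 0 := by
        simp only [idT]
        rw [if_neg]
        intro hc
        have h0 := hc (π.symm 0)
        simp only [Function.comp_apply, Equiv.apply_symm_apply, Fin.cons_zero] at h0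
        exact hij h0.symm
      rw [hid2, mul_zero, zero_sub]
      exact neg_nonpos.mpr (hBnn _ _)
    have hC'le : C' i (Fin.cons j h) ≤ 0 := by
      rw [hC']
      simp only
      rw [hid, mul_zero, add_zero]
      exact mul_nonpos_of_nonneg_of_nonpos ht0 hpsym
    exact mul_nonpos_of_nonpos_of_nonneg hC'le
      (Finset.prod_nonneg fun l _ => (hx _).le)
  set N : Matrix (Fin n) (Fin n) ℝ := M * Matrix.diagonal x with hN
  have hNentry : ∀ i j, N i j = M i j * x j := fun i j => by rw [hN, Matrix.mul_diagonal]
  have hdom : ∀ i, ∑ j ∈ Finset.univ.erase i, ‖N i j‖ < ‖N i i‖ := by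
    intro i
    have hsum : ∑ j, N i j = b i := by
      rw [← hMx]
      simp only [mulVec, dotProduct, hNentry]
    have hsplit : N i i + ∑ j ∈ Finset.univ.erase i, N i j = b i := by
      rw [← hsum, Finset.add_sum_erase _ _ (Finset.mem_univ i)]
    have hoffN : ∀ j ∈ Finset.univ.erase i, N i j ≤ 0 := fun j hj =>
      hNentry i j ▸ mul_nonpos_of_nonpos_of_nonneg
        (hoff i j (Ne.symm (Finset.ne_of_mem_erase hj))) (hx j).le
    have h1 : ∑ j ∈ Finset.univ.erase i, ‖N i j‖ = - ∑ j ∈ Finset.univ.erase i, N i j := by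
      rw [← Finset.sum_neg_distrib]
      exact Finset.sum_congr rfl fun j hj => by
        rw [Real.norm_eq_abs, abs_of_nonpos (hoffN j hj)]
    have h2 : 0 ≤ ∑ j ∈ Finset.univ.erase i, ‖N i j‖ :=
      Finset.sum_nonneg fun j _ => norm_nonneg _
    have h3 : N i i = b i + ∑ j ∈ Finset.univ.erase i, ‖N i j‖ := by
      rw [h1]; linarith
    rw [Real.norm_eq_abs, abs_of_nonneg (by rw [h3]; have := hb i; linarith), h3]
    have := hb i; linarith
  have hdetN : N.det ≠ 0 := det_ne_zero_of_sum_row_lt_diag hdom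
  have hdetM : M.det ≠ 0 := by
    intro h
    apply hdetN
    rw [hN, Matrix.det_mul, h, zero_mul]
  apply (Matrix.isUnit_iff_isUnit_det _).mpr
  rw [Matrix.det_smul]
  exact isUnit_iff_ne_zero.mpr (mul_ne_zero (pow_ne_zero _ (by positivity)) hdetM)
end

section
/- Let m ≥ 2 and n ≥ 1. Suppose A ∈ ℝ^{[m,n]} is a nonsingular M-tensor and b ∈ ℝⁿ is a positive vector. Let x : [0,1] → ℝⁿ be a continuous map with x(0) = (b₁^{1/(m-1)}, …, b_n^{1/(m-1)})ᵀ such that for every t ∈ [0,1], x(t) is positive and (t A + (1−t) I) x(t)^{m-1} = b. Then x(1) is the unique positive solution of A x^{m-1} = b; that is, A x(1)^{m-1} = b, and every positive vector y with A y^{m-1} = b equals x(1). -/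
lemma idT_tvec (n k : ℕ) (u : Fin n → ℝ) (i : Fin n) :
    tvec n k (idT n k) u i = u i ^ (k + 1) := by
  unfold tvec idT
  rw [show (∑ g : Fin (k+1) → Fin n, (if ∀ j, g j = i then (1:ℝ) else 0) * ∏ j, u (g j))
      = ∑ g : Fin (k+1) → Fin n, (if g = (fun _ => i) then ∏ j, u (g j) else 0) from
    Finset.sum_congr rfl (by
      intro g _
      by_cases h : g = fun _ => i
      · simp [h, funext_iff]
      · rw [if_neg h, if_neg, zero_mul]
        rw [funext_iff] at h; exact h)]
  rw [Finset.sum_ite_eq' Finset.univ (fun _ => i) (fun g => ∏ j, u (g j))]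
  simp [Finset.prod_const]

lemma tvec_split (n k : ℕ) (s : ℝ) (A B : Fin n → (Fin (k + 1) → Fin n) → ℝ)
    (hAeq : A = fun i g => s * idT n k i g - B i g) (u : Fin n → ℝ) (i : Fin n) :
    tvec n k A u i = s * u i ^ (k + 1) - tvec n k B u i := by
  subst hAeq
  rw [← idT_tvec n k u i]
  unfold tvec
  rw [Finset.mul_sum, ← Finset.sum_sub_distrib]
  exact Finset.sum_congr rfl (fun g _ => by ring)

lemma sol_le (k n : ℕ) (hn : 1 ≤ n) (s : ℝ)
    (B : Fin n → (Fin (k + 1) → Fin n) → ℝ) (hB : NonnegT n k B)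
    (b u v : Fin n → ℝ) (hb : ∀ i, 0 < b i) (hu : ∀ i, 0 < u i) (hv : ∀ i, 0 < v i)
    (heu : ∀ i, s * u i ^ (k + 1) - tvec n k B u i = b i)
    (hev : ∀ i, s * v i ^ (k + 1) - tvec n k B v i = b i) :
    ∀ i, u i ≤ v i := by
  have hne : (Finset.univ : Finset (Fin n)).Nonempty := ⟨⟨0, hn⟩, Finset.mem_univ _⟩
  obtain ⟨i0, -, hi0⟩ := Finset.exists_mem_eq_sup' hne (fun i => u i / v i)
  set τ := u i0 / v i0 with hτ
  have hτpos : 0 < τ := div_pos (hu i0) (hv i0)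
  have hle : ∀ i, u i ≤ τ * v i := by
    intro i
    have h1 : u i / v i ≤ τ :=
      (Finset.le_sup' (fun i => u i / v i) (Finset.mem_univ i)).trans_eq hi0
    calc u i = u i / v i * v i := (div_mul_cancel₀ _ (hv i).ne').symm
      _ ≤ τ * v i := mul_le_mul_of_nonneg_right h1 (hv i).le
  have heq : u i0 = τ * v i0 := by
    rw [hτ, div_mul_cancel₀ _ (hv i0).ne']
  have hmono : tvec n k B u i0 ≤ τ ^ (k + 1) * tvec n k B v i0 := by
    unfold tvec
    rw [Finset.mul_sum]
    apply Finset.sum_le_sum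
    intro g _
    rw [mul_left_comm]
    apply mul_le_mul_of_nonneg_left _ (hB i0 g)
    calc ∏ j, u (g j) ≤ ∏ j, τ * v (g j) :=
          Finset.prod_le_prod (fun j _ => (hu _).le) (fun j _ => hle _)
      _ = τ ^ (k + 1) * ∏ j, v (g j) := by
          rw [Finset.prod_mul_distrib, Finset.prod_const, Finset.card_univ, Fintype.card_fin]
  have hupow : u i0 ^ (k + 1) = τ ^ (k + 1) * v i0 ^ (k + 1) := by rw [heq, mul_pow]
  have h1 : τ ^ (k + 1) * b i0 ≤ b i0 := by
    have e1 := heu i0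
    have e2 := hev i0
    have e4 : s * (τ ^ (k + 1) * v i0 ^ (k + 1)) - tvec n k B u i0 = b i0 := by
      rw [← hupow]; exact e1
    calc τ ^ (k + 1) * b i0
        = τ ^ (k + 1) * (s * v i0 ^ (k + 1) - tvec n k B v i0) := by rw [e2]
      _ = s * (τ ^ (k + 1) * v i0 ^ (k + 1)) - τ ^ (k + 1) * tvec n k B v i0 := by ring
      _ ≤ s * (τ ^ (k + 1) * v i0 ^ (k + 1)) - tvec n k B u i0 := by linarith [hmono]
      _ = b i0 := e4
  have hτ1 : τ ≤ 1 := by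
    have : τ ^ (k + 1) ≤ 1 := by
      have := hb i0
      nlinarith
    exact (pow_le_one_iff_of_nonneg hτpos.le (Nat.succ_ne_zero k)).1 this
  intro i
  calc u i ≤ τ * v i := hle i
    _ ≤ 1 * v i := mul_le_mul_of_nonneg_right hτ1 (hv i).le
    _ = v i := one_mul _

/-- If `x : [0,1] → ℝⁿ` is a continuous path of positive solutions of the
homotopy, starting at `x(0) = b^{[1/(m-1)]}`, then `x(1)` is the unique positive solution of
`A x^{m-1} = b`. -/
theorem homotopy_endpoint_is_unique_solution (k n : ℕ) (hn : 1 ≤ n)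
    (A : Fin n → (Fin (k + 1) → Fin n) → ℝ) (hA : IsNsMTensor n k A)
    (b : Fin n → ℝ) (hb : ∀ i, 0 < b i)
    (x : ℝ → (Fin n → ℝ))
    (hcont : ContinuousOn x (Set.Icc (0 : ℝ) 1))
    (hx0 : x 0 = fun i => (b i) ^ (((k : ℝ) + 1)⁻¹))
    (hx : ∀ t ∈ Set.Icc (0 : ℝ) 1, (∀ i, 0 < x t i) ∧
      tvec n k (fun i g => t * A i g + (1 - t) * idT n k i g) (x t) = b) :
    tvec n k A (x 1) = b ∧
      ∀ y : Fin n → ℝ, (∀ i, 0 < y i) → tvec n k A y = b → y = x 1 := by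
  obtain ⟨s, B, hB, -, hAeq⟩ := hA
  have h1 := hx 1 (by norm_num)
  have hTeq : (fun i g => (1:ℝ) * A i g + (1 - 1) * idT n k i g) = A := by
    funext i g; ring
  have hx1 : tvec n k A (x 1) = b := by rw [← hTeq]; exact h1.2
  refine ⟨hx1, ?_⟩
  intro y hy hyA
  have key : ∀ u : Fin n → ℝ, tvec n k A u = b →
      (∀ i, s * u i ^ (k + 1) - tvec n k B u i = b i) := by
    intro u hub i
    rw [← tvec_split n k s A B hAeq u i, hub]
  funext i
  exact le_antisymm
    (sol_le k n hn s B hB b y (x 1) hb hy h1.1 (key y hyA) (key (x 1) hx1) i)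
    (sol_le k n hn s B hB b (x 1) y hb h1.1 hy (key (x 1) hx1) (key y hyA) i)
end

section
/- Let m ≥ 2, n ≥ 1 and let A = sI − B ∈ ℝ^{[m,n]}, where B is a nonnegative tensor and s > ρ(B). Define τ₀ = (s − ρ(B))/(ρ(B) − s + 2) if ρ(B) − s + 2 > 0, and τ₀ = 1 otherwise. Then τ₀ > 0 and for every t ∈ [0, 1 + τ₀) the tensor t A + (1−t) I is a nonsingular M-tensor. -/
/-- If `A = s I - B` with `B` nonnegative and `s > ρ(B)`, and
`τ₀ = (s - ρ(B))/(ρ(B) - s + 2)` if `ρ(B) - s + 2 > 0` and `τ₀ = 1` otherwise, then `τ₀ > 0`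
and `t A + (1 - t) I` is a nonsingular M-tensor for every `t ∈ [0, 1 + τ₀)`. -/
theorem extended_interval_isNsMTensor (k n : ℕ) (hn : 1 ≤ n)
    (s : ℝ) (B : Fin n → (Fin (k + 1) → Fin n) → ℝ)
    (hB : NonnegT n k B) (hs : specRad n k B < s)
    (A : Fin n → (Fin (k + 1) → Fin n) → ℝ)
    (hA : A = fun i g => s * idT n k i g - B i g)
    (τ₀ : ℝ)
    (hτ : τ₀ = if specRad n k B - s + 2 > 0 then
        (s - specRad n k B) / (specRad n k B - s + 2) else 1) :
    0 < τ₀ ∧ ∀ t ∈ Set.Ico (0 : ℝ) (1 + τ₀),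
      IsNsMTensor n k (fun i g => t * A i g + (1 - t) * idT n k i g) := by
  set ρ := specRad n k B with hρdef
  set S : Set ℝ := {r : ℝ | ∃ lam : ℂ, IsEig n k B lam ∧ r = ‖lam‖} with hSdef
  have hρ0 : 0 ≤ ρ := by
    apply Real.sSup_nonneg
    rintro x ⟨lam, _, rfl⟩
    exact norm_nonneg _
  have hτpos : 0 < τ₀ := by
    rw [hτ]
    split_ifs with h2
    · exact div_pos (by linarith) h2
    · norm_num
  refine ⟨hτpos, ?_⟩
  rintro t ⟨ht0, ht1⟩
  -- the scale lemma
  have hsum : ∀ (x : Fin n → ℂ) (i : Fin n),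
      ∑ g : Fin (k + 1) → Fin n, ((t * B i g : ℝ) : ℂ) * ∏ j, x (g j)
        = (t : ℂ) * ∑ g : Fin (k + 1) → Fin n, (B i g : ℂ) * ∏ j, x (g j) := by
    intro x i
    rw [Finset.mul_sum]
    refine Finset.sum_congr rfl fun g _ => ?_
    push_cast
    ring
  -- key arithmetic : t * ρ < t * s + (1 - t)
  have harith : t * ρ < t * s + (1 - t) := by
    rw [hτ] at ht1
    split_ifs at ht1 with h2
    · rcases le_or_gt (ρ - s + 1) 0 with hle | hlt
      · have h1 : t * (ρ - s + 1) ≤ 0 := mul_nonpos_of_nonneg_of_nonpos ht0 hle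
        nlinarith
      · have hone : 1 + (s - ρ) / (ρ - s + 2) = 2 / (ρ - s + 2) := by
          field_simp
          ring
        rw [hone] at ht1
        have h3 : t * (ρ - s + 2) < 2 := by
          rw [lt_div_iff₀ h2] at ht1
          linarith
        have h4 : t * (ρ - s) ≤ 0 :=
          mul_nonpos_of_nonneg_of_nonpos ht0 (by linarith)
        nlinarith
    · have h5 : 0 ≤ t * (s - ρ - 2) :=
        mul_nonneg ht0 (by linarith)
      nlinarith
  refine ⟨t * s + (1 - t), fun i g => t * B i g, ?_, ?_, ?_⟩
  · intro i g
    exact mul_nonneg ht0 (hB i g)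
  · -- specRad (t • B) ≤ t * ρ < t*s + (1-t)
    refine lt_of_le_of_lt (?_ : specRad n k (fun i g => t * B i g) ≤ t * ρ) harith
    rcases eq_or_lt_of_le ht0 with ht0' | htpos
    · -- t = 0
      apply Real.sSup_le _ (mul_nonneg ht0 hρ0)
      rintro r ⟨lam, ⟨x, hx, hx2⟩, rfl⟩
      have hlam : lam = 0 := by
        obtain ⟨i, hi⟩ := Function.ne_iff.mp hx
        have := hx2 i
        rw [hsum x i, ← ht0'] at this
        simp at this
        rcases this with h | h
        · exact h
        · exact absurd h hi
      rw [hlam]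
      simpa using mul_nonneg ht0 hρ0
    · by_cases hbdd : BddAbove S
      · apply Real.sSup_le _ (mul_nonneg ht0 hρ0)
        rintro r ⟨lam, ⟨x, hx, hx2⟩, rfl⟩
        have heig : IsEig n k B (lam / t) := by
          refine ⟨x, hx, fun i => ?_⟩
          have h := hx2 i
          rw [hsum x i] at h
          have htne : (t : ℂ) ≠ 0 := by
            exact_mod_cast ne_of_gt htpos
          field_simp
          linear_combination h
        have hmem : ‖lam / t‖ ∈ S := ⟨lam / t, heig, rfl⟩
        have hle : ‖lam / t‖ ≤ ρ := le_csSup hbdd hmem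
        have habs : ‖lam / t‖ = ‖lam‖ / t := by
          rw [norm_div]
          simp [abs_of_pos htpos]
        rw [habs, div_le_iff₀ htpos] at hle
        linarith [hle]
      · -- S unbounded : ρ = 0 and the scaled set is unbounded too
        have hρz : ρ = 0 := Real.sSup_of_not_bddAbove hbdd
        have hbdd2 : ¬ BddAbove {r : ℝ | ∃ lam : ℂ,
            IsEig n k (fun i g => t * B i g) lam ∧ r = ‖lam‖} := by
          rintro ⟨M, hM⟩
          apply hbdd
          refine ⟨M / t, ?_⟩
          rintro r ⟨lam, ⟨x, hx, hx2⟩, rfl⟩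
          have heig : IsEig n k (fun i g => t * B i g) (t * lam) := by
            refine ⟨x, hx, fun i => ?_⟩
            rw [hsum x i, hx2 i]
            ring
          have hmem : ‖(t : ℂ) * lam‖ ∈ {r : ℝ | ∃ lam : ℂ,
              IsEig n k (fun i g => t * B i g) lam ∧ r = ‖lam‖} :=
            ⟨(t : ℂ) * lam, heig, rfl⟩
          have := hM hmem
          rw [norm_mul] at this
          have habs : ‖(t : ℂ)‖ = t := by
            simp [abs_of_pos htpos]
          rw [habs] at this
          rw [le_div_iff₀ htpos]
          linarith [this]
        rw [hρdef] at hρz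
        unfold specRad
        rw [Real.sSup_of_not_bddAbove hbdd2]
        exact mul_nonneg ht0 hρ0
  · funext i g
    simp only [hA]
    ring
end
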